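/- Let L_n^α denote the monic Laguerre orthogonal polynomials for the weight e^{-x}x^α on (0,∞) (α > -1) and let a ≠ 0. Then for every n ≥ 0, the matrix polynomial Q_n(x) = [[-(1/a)L_n^{α+1}(x), (α+1)L_n^{α+1}(x) + x (L_n^{α+1})'(x)],[-(L_n^α)'(x), (1/a)L_n^α(x) + a x (L_n^α)'(x)]] satisfies ∫₀^∞ Q_n(x) W(x) Q_m(x)* dx = 0 for all n ≠ m, where W(x) = e^{-x}x^α[[x(1+a²x), ax],[ax,1]]. -/

import Mathlib

open Matrix Polynomial MeasureTheory Real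

section Aux

open Set Filter

lemma aux_integrable {γ : ℝ} (hγ : -1 < γ) (p : Polynomial ℝ) :
    IntegrableOn (fun x => p.eval x * (Real.exp (-x) * x ^ γ)) (Set.Ioi 0) := by
  induction p using Polynomial.induction_on' with
  | add p q hp hq =>
    exact IntegrableOn.congr_fun (hp.add hq) (fun x _ => by simp [add_mul]) measurableSet_Ioi
  | monomial k c =>
    have h : IntegrableOn (fun x : ℝ => Real.exp (-x) * x ^ (γ + k)) (Set.Ioi 0) := by
      have := Real.GammaIntegral_convergent (s := γ + k + 1)
        (by have : (0:ℝ) ≤ k := Nat.cast_nonneg k; linarith)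
      simpa using this
    refine IntegrableOn.congr_fun (h.const_mul c) (fun x hx => ?_) measurableSet_Ioi
    have hx0 : (0:ℝ) < x := hx
    rw [Real.rpow_add hx0, Real.rpow_natCast]
    simp [Polynomial.eval_monomial]
    ring

lemma aux_tendsto (γ : ℝ) (p : Polynomial ℝ) :
    Tendsto (fun x => p.eval x * (Real.exp (-x) * x ^ γ)) atTop (nhds 0) := by
  induction p using Polynomial.induction_on' with
  | add p q hp hq =>
    have := hp.add hq
    simpa [add_mul] using this
  | monomial k c =>
    have h := tendsto_rpow_mul_exp_neg_mul_atTop_nhds_zero (γ + k) 1 one_pos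
    have h2 := h.const_mul c
    rw [mul_zero] at h2
    apply h2.congr'
    filter_upwards [eventually_gt_atTop (0:ℝ)] with x hx
    rw [Real.rpow_add hx, Real.rpow_natCast]
    simp [Polynomial.eval_monomial]
    ring

lemma aux_ftc {α : ℝ} (hα : -1 < α) (r : Polynomial ℝ) :
    ∫ x in Set.Ioi (0:ℝ),
      ((Polynomial.derivative r).eval x * x + r.eval x * ((α+1) - x)) * (Real.exp (-x) * x ^ α)
      = 0 := by
  have hβ : 0 < α + 1 := by linarith
  set f : ℝ → ℝ := fun x => r.eval x * (Real.exp (-x) * x ^ (α+1)) with hfdef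
  have hderiv : ∀ x ∈ Set.Ioi (0:ℝ), HasDerivAt f
      (((Polynomial.derivative r).eval x * x + r.eval x * ((α+1) - x)) * (Real.exp (-x) * x ^ α)) x := by
    intro x hx
    have hx0 : (0:ℝ) < x := hx
    have h1 : HasDerivAt (fun y : ℝ => Real.exp (-y)) (-Real.exp (-x)) x := by
      simpa [Function.comp_def] using (Real.hasDerivAt_exp (-x)).comp x (hasDerivAt_neg x)
    have h2 : HasDerivAt (fun y : ℝ => y ^ (α+1)) ((α+1) * x ^ α) x := by
      have := Real.hasDerivAt_rpow_const (x := x) (p := α+1) (Or.inl hx0.ne')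
      simpa [add_sub_cancel_right] using this
    have h3 := r.hasDerivAt x
    have := h3.mul (h1.mul h2)
    refine this.congr_deriv ?_
    have hxp : x ^ (α+1) = x ^ α * x := Real.rpow_add_one hx0.ne' α
    simp only [Pi.mul_apply]
    rw [hxp]; ring
  have hcont : ContinuousWithinAt f (Set.Ici 0) 0 := by
    apply ContinuousAt.continuousWithinAt
    have h2 : ContinuousAt (fun y : ℝ => y ^ (α+1)) 0 :=
      Real.continuousAt_rpow_const 0 (α+1) (Or.inr hβ.le)
    exact (r.continuousAt).mul ((Real.continuous_exp.comp continuous_neg).continuousAt.mul h2)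
  have hint : IntegrableOn (fun x =>
      ((Polynomial.derivative r).eval x * x + r.eval x * ((α+1) - x)) * (Real.exp (-x) * x ^ α))
      (Set.Ioi 0) := by
    refine IntegrableOn.congr_fun
      (aux_integrable hα (Polynomial.derivative r * X + r * (C (α+1) - X)))
      (fun x _ => ?_) measurableSet_Ioi
    simp <;> ring
  have htend : Tendsto f atTop (nhds 0) := aux_tendsto (α+1) r
  have := integral_Ioi_of_hasDerivAt_of_tendsto hcont hderiv hint htend
  rw [this, hfdef]
  simp [Real.zero_rpow hβ.ne']

lemma aux_orth {γ : ℝ} (hγ : -1 < γ) (L : ℕ → Polynomial ℝ)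
    (hM : ∀ n, (L n).Monic ∧ (L n).natDegree = n)
    (hO : ∀ n m, n ≠ m → ∫ x in Set.Ioi (0:ℝ),
      (L n).eval x * (L m).eval x * (Real.exp (-x) * x ^ γ) = 0)
    (m : ℕ) (p : Polynomial ℝ) (hp : p.natDegree < m) :
    ∫ x in Set.Ioi (0:ℝ), p.eval x * (L m).eval x * (Real.exp (-x) * x ^ γ) = 0 := by
  suffices H : ∀ d, d < m → ∀ p : Polynomial ℝ, p.natDegree ≤ d →
      ∫ x in Set.Ioi (0:ℝ), p.eval x * (L m).eval x * (Real.exp (-x) * x ^ γ) = 0 from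
    H p.natDegree hp p le_rfl
  intro d
  induction d with
  | zero =>
    intro hd p hp0
    have hpc : p = C (p.coeff 0) := p.eq_C_of_natDegree_eq_zero (Nat.le_zero.mp hp0)
    have h0 : L 0 = 1 := by
      have := (hM 0).1
      exact this.natDegree_eq_zero.mp (hM 0).2
    have h := hO 0 m (by omega)
    rw [h0] at h
    simp only [Polynomial.eval_one, one_mul] at h
    rw [hpc]
    simp only [Polynomial.eval_C]
    rw [show (fun x => p.coeff 0 * (L m).eval x * (Real.exp (-x) * x ^ γ))
        = (fun x => p.coeff 0 * ((L m).eval x * (Real.exp (-x) * x ^ γ))) from by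
      funext x; ring]
    rw [MeasureTheory.integral_const_mul, h, mul_zero]
  | succ d ih =>
    intro hd p hp0
    set c := p.coeff (d+1) with hc
    set q := p - C c * L (d+1) with hq
    have hLd1 : (L (d+1)).natDegree = d+1 := (hM (d+1)).2
    have hqdeg : q.natDegree ≤ d := by
      refine Polynomial.natDegree_le_iff_coeff_eq_zero.mpr (fun k hk => ?_)
      simp only [hq, Polynomial.coeff_sub, Polynomial.coeff_C_mul]
      rcases eq_or_lt_of_le (Nat.succ_le_of_lt hk) with hk1 | hk1
      · rw [← hk1]
        have hco := (hM (d+1)).1.coeff_natDegree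
        rw [hLd1] at hco
        rw [hco, mul_one, ← hc, sub_self]
      · rw [Polynomial.coeff_eq_zero_of_natDegree_lt (lt_of_le_of_lt hp0 hk1),
          Polynomial.coeff_eq_zero_of_natDegree_lt (by omega : (L (d+1)).natDegree < k)]
        simp
    have hpq : p = q + C c * L (d+1) := by rw [hq]; ring
    have I1 : IntegrableOn
        (fun x => q.eval x * (L m).eval x * (Real.exp (-x) * x ^ γ)) (Set.Ioi 0) :=
      IntegrableOn.congr_fun (aux_integrable hγ (q * L m))
        (fun x _ => by simp <;> ring) measurableSet_Ioi
    have I2 : IntegrableOn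
        (fun x => c * ((L (d+1)).eval x * (L m).eval x * (Real.exp (-x) * x ^ γ))) (Set.Ioi 0) :=
      IntegrableOn.congr_fun (aux_integrable hγ (C c * (L (d+1) * L m)))
        (fun x _ => by simp <;> ring) measurableSet_Ioi
    have hsplit : (fun x => p.eval x * (L m).eval x * (Real.exp (-x) * x ^ γ))
        = (fun x => q.eval x * (L m).eval x * (Real.exp (-x) * x ^ γ)
            + c * ((L (d+1)).eval x * (L m).eval x * (Real.exp (-x) * x ^ γ))) := by
      funext x
      rw [hpq]
      simp
      ring
    rw [hsplit, MeasureTheory.integral_add I1 I2, ih (by omega) q hqdeg,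
      MeasureTheory.integral_const_mul, hO (d+1) m (by omega), mul_zero, add_zero]

lemma aux_orthP {γ : ℝ} (hγ : -1 < γ) (L : ℕ → Polynomial ℝ)
    (hM : ∀ n, (L n).Monic ∧ (L n).natDegree = n)
    (hO : ∀ n m, n ≠ m → ∫ x in Set.Ioi (0:ℝ),
      (L n).eval x * (L m).eval x * (Real.exp (-x) * x ^ γ) = 0)
    (m : ℕ) (q : Polynomial ℝ) (hq : q.natDegree < m) :
    ∫ x in Set.Ioi (0:ℝ), (q * L m).eval x * (Real.exp (-x) * x ^ γ) = 0 := by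
  have h2 := aux_orth hγ L hM hO m q hq
  refine Eq.trans (MeasureTheory.setIntegral_congr_fun
    (g := fun x => q.eval x * (L m).eval x * (Real.exp (-x) * x ^ γ))
    measurableSet_Ioi (fun x _ => by rw [Polynomial.eval_mul])) h2

lemma aux_orthPX {γ : ℝ} (hγ : -1 < γ) (L : ℕ → Polynomial ℝ)
    (hM : ∀ n, (L n).Monic ∧ (L n).natDegree = n)
    (hO : ∀ n m, n ≠ m → ∫ x in Set.Ioi (0:ℝ),
      (L n).eval x * (L m).eval x * (Real.exp (-x) * x ^ (γ+1)) = 0)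
    (m : ℕ) (q : Polynomial ℝ) (hq : q.natDegree < m) :
    ∫ x in Set.Ioi (0:ℝ), (X * (q * L m)).eval x * (Real.exp (-x) * x ^ γ) = 0 := by
  have h2 := aux_orth (by linarith : (-1:ℝ) < γ+1) L hM hO m q hq
  refine Eq.trans (MeasureTheory.setIntegral_congr_fun
    (g := fun x => q.eval x * (L m).eval x * (Real.exp (-x) * x ^ (γ+1)))
    measurableSet_Ioi (fun x hx => ?_)) h2
  have hx0 : (0:ℝ) < x := hx
  show _ = Polynomial.eval x q * Polynomial.eval x (L m) * (Real.exp (-x) * x ^ (γ+1))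
  rw [Real.rpow_add_one hx0.ne']
  simp only [Polynomial.eval_mul, Polynomial.eval_X]
  ring

lemma aux_split {α : ℝ} (hα : -1 < α) (r P : Polynomial ℝ) (f : ℝ → ℝ)
    (hf : ∀ x, f x = ((Polynomial.derivative r).eval x * x + r.eval x * ((α+1) - x)
        + P.eval x) * (Real.exp (-x) * x ^ α))
    (hP : ∫ x in Set.Ioi (0:ℝ), P.eval x * (Real.exp (-x) * x ^ α) = 0) :
    ∫ x in Set.Ioi (0:ℝ), f x = 0 := by
  have I1 : IntegrableOn (fun x =>
      ((Polynomial.derivative r).eval x * x + r.eval x * ((α+1) - x)) * (Real.exp (-x) * x ^ α))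
      (Set.Ioi 0) :=
    IntegrableOn.congr_fun
      (aux_integrable hα (Polynomial.derivative r * X + r * (C (α+1) - X)))
      (fun x _ => by simp <;> ring) measurableSet_Ioi
  have I2 : IntegrableOn (fun x => P.eval x * (Real.exp (-x) * x ^ α)) (Set.Ioi 0) :=
    aux_integrable hα P
  have hsplit : f = (fun x =>
      ((Polynomial.derivative r).eval x * x + r.eval x * ((α+1) - x)) * (Real.exp (-x) * x ^ α)
      + P.eval x * (Real.exp (-x) * x ^ α)) := by
    funext x; rw [hf x]; ring
  rw [hsplit, MeasureTheory.integral_add I1 I2, aux_ftc hα r, hP, add_zero]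

lemma deg_X_mul_der (p : Polynomial ℝ) :
    (X * Polynomial.derivative p).natDegree ≤ p.natDegree := by
  rcases eq_or_ne (Polynomial.derivative p) 0 with h | h
  · simp [h]
  · have hp0 : p.natDegree ≠ 0 := by
      intro h0
      rw [p.eq_C_of_natDegree_eq_zero h0] at h
      simp at h
    have := Polynomial.natDegree_derivative_lt hp0
    calc (X * Polynomial.derivative p).natDegree
        ≤ X.natDegree + (Polynomial.derivative p).natDegree := Polynomial.natDegree_mul_le
      _ = 1 + (Polynomial.derivative p).natDegree := by rw [Polynomial.natDegree_X]
      _ ≤ p.natDegree := by omega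

lemma deg_CX_mul_der (c : ℝ) (p : Polynomial ℝ) :
    ((C c - X) * Polynomial.derivative p).natDegree ≤ p.natDegree := by
  rcases eq_or_ne (Polynomial.derivative p) 0 with h | h
  · simp [h]
  · have hp0 : p.natDegree ≠ 0 := by
      intro h0
      rw [p.eq_C_of_natDegree_eq_zero h0] at h
      simp at h
    have h1 := Polynomial.natDegree_derivative_lt hp0
    have h2 : (C c - X : Polynomial ℝ).natDegree ≤ 1 :=
      le_trans (Polynomial.natDegree_sub_le _ _) (by simp)
    calc ((C c - X) * Polynomial.derivative p).natDegree
        ≤ (C c - X : Polynomial ℝ).natDegree + (Polynomial.derivative p).natDegree :=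
          Polynomial.natDegree_mul_le
      _ ≤ 1 + (Polynomial.derivative p).natDegree := by omega
      _ ≤ p.natDegree := by omega

lemma deg_q (c0 c1 : ℝ) (f : Polynomial ℝ) :
    (C c0 * f - X * Polynomial.derivative (Polynomial.derivative f)
      - (C c1 - X) * Polynomial.derivative f).natDegree ≤ f.natDegree := by
  have hA : (C c0 * f).natDegree ≤ f.natDegree :=
    le_trans Polynomial.natDegree_mul_le (by simp)
  have hB : (X * Polynomial.derivative (Polynomial.derivative f)).natDegree ≤ f.natDegree :=
    le_trans (deg_X_mul_der (Polynomial.derivative f))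
      (le_trans (Polynomial.natDegree_derivative_le f) (Nat.sub_le _ _))
  have hC := deg_CX_mul_der c1 f
  exact le_trans (Polynomial.natDegree_sub_le _ _)
    (max_le (le_trans (Polynomial.natDegree_sub_le _ _) (max_le hA hB)) hC)

lemma aux_sym {A B S : Matrix (Fin 2) (Fin 2) ℝ} (hS : Sᵀ = S) (i j : Fin 2) :
    (A * S * Bᵀ) i j = (B * S * Aᵀ) j i := by
  conv_lhs => rw [← hS]
  have h : A * Sᵀ * Bᵀ = (B * S * Aᵀ)ᵀ := by
    rw [Matrix.transpose_mul, Matrix.transpose_mul, Matrix.transpose_transpose, Matrix.mul_assoc]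
  rw [h, Matrix.transpose_apply]

end Aux

/-- Orthogonality of the matrix polynomials `Q_n` obtained from the monic Laguerre
polynomials of parameters `α+1` and `α` via the strong Darboux transformer `V`, with
respect to the Laguerre-type weight `W(x) = e^{-x}x^α [[x(1+a²x), ax],[ax,1]]`. -/
theorem stmt8 (a α : ℝ) (ha : a ≠ 0) (hα : -1 < α)
    (La Lb : ℕ → Polynomial ℝ)
    -- La n = monic Laguerre polynomial L_n^{α+1}, Lb n = L_n^α
    (hLaMonic : ∀ n, (La n).Monic ∧ (La n).natDegree = n)
    (hLbMonic : ∀ n, (Lb n).Monic ∧ (Lb n).natDegree = n)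
    (hLaOrth : ∀ n m, n ≠ m →
      ∫ x in Set.Ioi (0 : ℝ),
        (La n).eval x * (La m).eval x * (Real.exp (-x) * x ^ (α + 1)) = 0)
    (hLbOrth : ∀ n m, n ≠ m →
      ∫ x in Set.Ioi (0 : ℝ),
        (Lb n).eval x * (Lb m).eval x * (Real.exp (-x) * x ^ α) = 0) :
    ∀ n m, n ≠ m → ∀ i j : Fin 2,
      (∫ x in Set.Ioi (0 : ℝ),
        (((!![C (-(1/a)) * La n, C (α + 1) * La n + X * derivative (La n);
              -derivative (Lb n), C (1/a) * Lb n + C a * X * derivative (Lb n)] :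
            Matrix (Fin 2) (Fin 2) (Polynomial ℝ)).map (Polynomial.eval x)) *
          ((Real.exp (-x) * x ^ α) • !![x * (1 + a^2 * x), a * x; a * x, 1]) *
          ((!![C (-(1/a)) * La m, C (α + 1) * La m + X * derivative (La m);
              -derivative (Lb m), C (1/a) * Lb m + C a * X * derivative (Lb m)] :
            Matrix (Fin 2) (Fin 2) (Polynomial ℝ)).map (Polynomial.eval x))ᵀ) i j) = 0 := by
  have key : ∀ n m, n < m → ∀ i j : Fin 2,
      (∫ x in Set.Ioi (0 : ℝ),
        (((!![C (-(1/a)) * La n, C (α + 1) * La n + X * derivative (La n);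
              -derivative (Lb n), C (1/a) * Lb n + C a * X * derivative (Lb n)] :
            Matrix (Fin 2) (Fin 2) (Polynomial ℝ)).map (Polynomial.eval x)) *
          ((Real.exp (-x) * x ^ α) • !![x * (1 + a^2 * x), a * x; a * x, 1]) *
          ((!![C (-(1/a)) * La m, C (α + 1) * La m + X * derivative (La m);
              -derivative (Lb m), C (1/a) * Lb m + C a * X * derivative (Lb m)] :
            Matrix (Fin 2) (Fin 2) (Polynomial ℝ)).map (Polynomial.eval x))ᵀ) i j) = 0 := by
    intro n m hnm i j
    have hmpos : 0 < m := by omega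
    fin_cases i <;> fin_cases j <;>
      simp only [Matrix.mul_apply, Matrix.transpose_apply, Matrix.smul_apply, Matrix.map_apply,
        Fin.sum_univ_two, Matrix.cons_val', Matrix.cons_val_zero, Matrix.cons_val_one,
        Matrix.head_cons, Matrix.head_fin_const, Matrix.empty_val', Matrix.cons_val_fin_one,
        Polynomial.eval_mul, Polynomial.eval_add, Polynomial.eval_C, Polynomial.eval_X,
        Polynomial.eval_neg, smul_eq_mul, Fin.mk_zero, Fin.mk_one, Fin.isValue, Matrix.of_apply]
    -- entry (0,0)
    · refine aux_split hα
        (((C (α+1) - X) * La n + X * derivative (La n)) * La m)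
        (X * ((C (1 + 1/a^2) * La n - X * derivative (derivative (La n))
          - (C (α+2) - X) * derivative (La n)) * La m))
        _ (fun x => by
          simp only [Polynomial.derivative_mul, Polynomial.derivative_add,
            Polynomial.derivative_sub, Polynomial.derivative_X, Polynomial.derivative_C,
            Polynomial.eval_mul, Polynomial.eval_add, Polynomial.eval_sub, Polynomial.eval_C,
            Polynomial.eval_X, Polynomial.eval_one, Polynomial.eval_neg, Polynomial.eval_zero]
          field_simp
          ring) ?_
      exact aux_orthPX hα La hLaMonic hLaOrth m _
        (lt_of_le_of_lt (le_trans (deg_q (1 + 1/a^2) (α+2) (La n)) (le_of_eq (hLaMonic n).2)) hnm)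
    -- entry (0,1)
    · refine aux_split hα (C (1/a) * (La n * Lb m)) 0
        _ (fun x => by
          simp only [Polynomial.derivative_mul, Polynomial.derivative_add,
            Polynomial.derivative_sub, Polynomial.derivative_X, Polynomial.derivative_C,
            Polynomial.eval_mul, Polynomial.eval_add, Polynomial.eval_sub, Polynomial.eval_C,
            Polynomial.eval_X, Polynomial.eval_one, Polynomial.eval_neg, Polynomial.eval_zero]
          field_simp
          ring) ?_
      simp
    -- entry (1,0)
    · refine aux_split hα (C (1/a) * (La m * Lb n)) 0
        _ (fun x => by
          simp only [Polynomial.derivative_mul, Polynomial.derivative_add,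
            Polynomial.derivative_sub, Polynomial.derivative_X, Polynomial.derivative_C,
            Polynomial.eval_mul, Polynomial.eval_add, Polynomial.eval_sub, Polynomial.eval_C,
            Polynomial.eval_X, Polynomial.eval_one, Polynomial.eval_neg, Polynomial.eval_zero]
          field_simp
          ring) ?_
      simp
    -- entry (1,1)
    · refine aux_split hα (derivative (Lb n) * Lb m)
        ((C (1/a^2) * Lb n - X * derivative (derivative (Lb n))
          - (C (α+1) - X) * derivative (Lb n)) * Lb m)
        _ (fun x => by
          simp only [Polynomial.derivative_mul, Polynomial.derivative_add,
            Polynomial.derivative_sub, Polynomial.derivative_X, Polynomial.derivative_C,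
            Polynomial.eval_mul, Polynomial.eval_add, Polynomial.eval_sub, Polynomial.eval_C,
            Polynomial.eval_X, Polynomial.eval_one, Polynomial.eval_neg]
          field_simp
          ring) ?_
      exact aux_orthP hα Lb hLbMonic hLbOrth m _
        (lt_of_le_of_lt (le_trans (deg_q (1/a^2) (α+1) (Lb n)) (le_of_eq (hLbMonic n).2)) hnm)
  intro n m hnm i j
  rcases hnm.lt_or_gt with h | h
  · exact key n m h i j
  · have hW : ∀ x : ℝ, ((Real.exp (-x) * x ^ α) • !![x * (1 + a^2 * x), a * x; a * x, 1])ᵀ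
        = ((Real.exp (-x) * x ^ α) • !![x * (1 + a^2 * x), a * x; a * x, 1]) := by
      intro x
      rw [Matrix.transpose_smul]
      congr 1
      ext i' j'
      fin_cases i' <;> fin_cases j' <;> simp
    exact Eq.trans (MeasureTheory.integral_congr_ae
      (Filter.Eventually.of_forall fun x => aux_sym (hW x) i j)) (key m n h j i)
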